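/- Let I = I_{V_c} be the monomial codimension-c star configuration ideal in R = k[x_0,…,x_N] (arising from the N+1 coordinate hyperplanes of P^N), where 1 ≤ c ≤ N. Let l ≥ 1 and write l = qc + r with integers q ≥ 0 and 1 ≤ r ≤ c. Then the least degree of a nonzero homogeneous element of the symbolic power I^{(l)} is α(I^{(l)}) = (q+1)(N+1) − c + r. -/

import Mathlib

open MvPolynomial

noncomputable section

/-- The monomial codimension-`c` star configuration ideal in `k[x_0, …, x_N]`:
the intersection of the ideals `P_S = (x_i : i ∈ S)` over all subsets `S` of
cardinality `c`. -/
def monoStar (k : Type*) [Field k] (N c : ℕ) : Ideal (MvPolynomial (Fin (N + 1)) k) :=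
  ⨅ (S : Finset (Fin (N + 1))) (_ : S.card = c),
    Ideal.span ((fun i => (X i : MvPolynomial (Fin (N + 1)) k)) '' ↑S)

/-- The `ℓ`-th symbolic power of the monomial star configuration ideal. -/
def monoStarSym (k : Type*) [Field k] (N c ℓ : ℕ) : Ideal (MvPolynomial (Fin (N + 1)) k) :=
  ⨅ (S : Finset (Fin (N + 1))) (_ : S.card = c),
    (Ideal.span ((fun i => (X i : MvPolynomial (Fin (N + 1)) k)) '' ↑S)) ^ ℓ

/-- The initial degree of an ideal: the least degree of a nonzero homogeneous element. -/
def initialDegree {k : Type*} [Field k] {N : ℕ}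
    (J : Ideal (MvPolynomial (Fin (N + 1)) k)) : ℕ :=
  sInf {d : ℕ | ∃ f ∈ J, f ≠ 0 ∧ f.IsHomogeneous d}

namespace MonoStarAux

variable {k : Type*} [Field k] {N : ℕ}

/-- A monomial whose exponents sum to at least `ℓ` over `S` lies in `P_S^ℓ`. -/
lemma monomial_mem_pow (S : Finset (Fin (N + 1))) (ℓ : ℕ) (e : Fin (N + 1) →₀ ℕ) (a : k)
    (h : ℓ ≤ ∑ i ∈ S, e i) :
    monomial e a ∈ (Ideal.span ((fun i => (X i : MvPolynomial (Fin (N + 1)) k)) '' ↑S)) ^ ℓ := by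
  induction ℓ generalizing e with
  | zero => simp
  | succ n ih =>
    have hpos : 0 < ∑ i ∈ S, e i := lt_of_lt_of_le (Nat.succ_pos n) h
    obtain ⟨i, hiS, hi⟩ : ∃ i ∈ S, 0 < e i := by
      by_contra hh
      push_neg at hh
      simp only [Nat.le_zero] at hh
      rw [Finset.sum_eq_zero hh] at hpos
      exact lt_irrefl 0 hpos
    set e' := e - Finsupp.single i 1 with he'
    have hle : Finsupp.single i 1 ≤ e := Finsupp.single_le_iff.mpr hi
    have heq : e' + Finsupp.single i 1 = e := tsub_add_cancel_of_le hle
    have he'i : e' i = e i - 1 := by simp [he', Finsupp.tsub_apply]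
    have he'j : ∀ j, j ≠ i → e' j = e j := by
      intro j hj
      simp [he', Finsupp.tsub_apply, Finsupp.single_apply, (Ne.symm hj)]
    have hsum : n ≤ ∑ j ∈ S, e' j := by
      have h1 : ∑ j ∈ S, e j = e i + ∑ j ∈ S.erase i, e j :=
        (Finset.add_sum_erase S e hiS).symm
      have h2 : ∑ j ∈ S, e' j = e' i + ∑ j ∈ S.erase i, e' j :=
        (Finset.add_sum_erase S e' hiS).symm
      have h3 : ∑ j ∈ S.erase i, e' j = ∑ j ∈ S.erase i, e j :=
        Finset.sum_congr rfl fun j hj => he'j j (Finset.ne_of_mem_erase hj)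
      omega
    have hmul : monomial e a = monomial e' a * X i := by
      rw [X, monomial_mul, mul_one, heq]
    rw [hmul, pow_succ]
    exact Ideal.mul_mem_mul (ih e' hsum) (Ideal.subset_span ⟨i, hiS, rfl⟩)

/-- The monomial ideal of polynomials all of whose monomials have `S`-degree at least `ℓ`. -/
def lowerIdeal (S : Finset (Fin (N + 1))) (ℓ : ℕ) (k : Type*) [Field k] :
    Ideal (MvPolynomial (Fin (N + 1)) k) where
  carrier := {f | ∀ m ∈ f.support, ℓ ≤ ∑ i ∈ S, m i}
  zero_mem' := by simp
  add_mem' := by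
    intro f g hf hg m hm
    rcases Finset.mem_union.mp (MvPolynomial.support_add hm) with h | h
    · exact hf m h
    · exact hg m h
  smul_mem' := by
    intro p f hf m hm
    have hm' : m ∈ (p * f).support := by simpa [smul_eq_mul] using hm
    obtain ⟨a, ha, b, hb, hab⟩ := Finset.mem_add.mp (MvPolynomial.support_mul p f hm')
    have := hf b hb
    calc ℓ ≤ ∑ i ∈ S, b i := this
      _ ≤ ∑ i ∈ S, a i + ∑ i ∈ S, b i := Nat.le_add_left _ _
      _ = ∑ i ∈ S, m i := by
          rw [← Finset.sum_add_distrib]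
          exact Finset.sum_congr rfl fun i _ => by rw [← hab]; simp

lemma pow_le_lowerIdeal (S : Finset (Fin (N + 1))) (ℓ : ℕ) :
    (Ideal.span ((fun i => (X i : MvPolynomial (Fin (N + 1)) k)) '' ↑S)) ^ ℓ ≤
      lowerIdeal S ℓ k := by
  induction ℓ with
  | zero =>
    intro f _ m _
    exact Nat.zero_le _
  | succ n ih =>
    rw [pow_succ, Ideal.mul_le]
    intro f hf g hg
    have hf' := ih hf
    have hg' : g ∈ lowerIdeal S 1 k := by
      refine Ideal.span_le.mpr ?_ hg
      rintro _ ⟨i, hiS, rfl⟩ m hm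
      rw [MvPolynomial.support_X] at hm
      rw [Finset.mem_singleton] at hm
      subst hm
      calc (1 : ℕ) = ∑ j ∈ {i}, Finsupp.single i 1 j := by simp
        _ ≤ ∑ j ∈ S, Finsupp.single i 1 j :=
            Finset.sum_le_sum_of_subset (Finset.singleton_subset_iff.mpr hiS)
    intro m hm
    obtain ⟨a, ha, b, hb, hab⟩ := Finset.mem_add.mp (MvPolynomial.support_mul f g hm)
    have h1 := hf' a ha
    have h2 := hg' b hb
    have h3 : ∑ i ∈ S, m i = ∑ i ∈ S, a i + ∑ i ∈ S, b i := by
      rw [← Finset.sum_add_distrib]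
      exact Finset.sum_congr rfl fun i _ => by rw [← hab]; simp
    omega

/-- There is a subset of cardinality `c` attaining the `c` smallest values of `e`. -/
lemma exists_bottom_subset {α : Type*} [DecidableEq α] (e : α → ℕ) :
    ∀ (c : ℕ) (U : Finset α), c ≤ U.card →
      ∃ S, S ⊆ U ∧ S.card = c ∧ ∀ i ∈ U \ S, ∀ j ∈ S, e j ≤ e i := by
  intro c
  induction c with
  | zero => exact fun U _ => ⟨∅, Finset.empty_subset U, rfl, by simp⟩
  | succ n ih =>
    intro U hU
    have hne : U.Nonempty := Finset.card_pos.mp (by omega)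
    obtain ⟨m, hmU, hmin⟩ := Finset.exists_min_image U e hne
    obtain ⟨S', hS'sub, hS'card, hS'min⟩ := ih (U.erase m)
      (by rw [Finset.card_erase_of_mem hmU]; omega)
    refine ⟨insert m S', ?_, ?_, ?_⟩
    · exact Finset.insert_subset hmU (hS'sub.trans (Finset.erase_subset m U))
    · rw [Finset.card_insert_of_notMem (fun h => (Finset.mem_erase.mp (hS'sub h)).1 rfl), hS'card]
    · intro i hi j hj
      rcases Finset.mem_insert.mp hj with rfl | hj'
      · exact hmin i (Finset.mem_sdiff.mp hi).1
      · refine hS'min i ?_ j hj'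
        rw [Finset.mem_sdiff] at hi ⊢
        refine ⟨Finset.mem_erase.mpr ⟨?_, hi.1⟩, fun h => hi.2 (Finset.mem_insert_of_mem h)⟩
        rintro rfl
        exact hi.2 (Finset.mem_insert_self _ _)

/-- The combinatorial lower bound on the total degree. -/
lemma sum_lower {c q r : ℕ} (hc1 : 1 ≤ c) (hc2 : c ≤ N) (hr1 : 1 ≤ r) (hr2 : r ≤ c)
    (e : Fin (N + 1) → ℕ)
    (he : ∀ S : Finset (Fin (N + 1)), S.card = c → q * c + r ≤ ∑ i ∈ S, e i) :
    (q + 1) * (N + 1) - c + r ≤ ∑ i, e i := by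
  obtain ⟨S, hSU, hScard, hmin⟩ := exists_bottom_subset e c Finset.univ
    (by rw [Finset.card_univ, Fintype.card_fin]; omega)
  have h1 : q * c + r ≤ ∑ i ∈ S, e i := he S hScard
  obtain ⟨j, hjS, hj⟩ : ∃ j ∈ S, q + 1 ≤ e j := by
    by_contra hh
    push_neg at hh
    have hle : ∑ i ∈ S, e i ≤ ∑ _i ∈ S, q :=
      Finset.sum_le_sum fun i hi => by have := hh i hi; omega
    rw [Finset.sum_const, hScard, smul_eq_mul, Nat.mul_comm] at hle
    omega
  have h3 : ∑ _i ∈ Finset.univ \ S, (q + 1) ≤ ∑ i ∈ Finset.univ \ S, e i :=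
    Finset.sum_le_sum fun i hi => le_trans hj (hmin i hi j hjS)
  have hcard : (Finset.univ \ S).card = N + 1 - c := by
    rw [Finset.card_sdiff_of_subset hSU, hScard, Finset.card_univ, Fintype.card_fin]
  rw [Finset.sum_const, hcard, smul_eq_mul] at h3
  have h4 : ∑ i, e i = ∑ i ∈ S, e i + ∑ i ∈ Finset.univ \ S, e i := by
    rw [← Finset.sum_union Finset.disjoint_sdiff]
    congr 1
    rw [Finset.union_sdiff_of_subset hSU]
  have key : (q + 1) * (N + 1) = q * c + c + (N + 1 - c) * (q + 1) := by
    have h : N + 1 - c + c = N + 1 := by omega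
    calc (q + 1) * (N + 1) = (q + 1) * ((N + 1 - c) + c) := by rw [h]
      _ = q * c + c + (N + 1 - c) * (q + 1) := by ring
  omega

lemma arith1 (N c q r : ℕ) (hc2 : c ≤ N) (hr1 : 1 ≤ r) (hr2 : r ≤ c) :
    (N + 1 - c + r) * (q + 1) + (N + 1 - (N + 1 - c + r)) * q
      = (q + 1) * (N + 1) - c + r := by
  obtain ⟨K, rfl⟩ : ∃ K, c = r + K := ⟨c - r, by omega⟩
  obtain ⟨M, rfl⟩ : ∃ M, N = r + K + M := ⟨N - (r + K), by omega⟩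
  have e1 : r + K + M + 1 - (r + K) + r = M + 1 + r := by omega
  have e2 : r + K + M + 1 - (M + 1 + r) = K := by omega
  rw [e1, e2]
  have e3 : (q + 1) * (r + K + M + 1) = (M + 1 + r) * (q + 1) + K * q + K := by ring
  rw [e3]
  have hX : r ≤ (M + 1 + r) * (q + 1) + K * q := by
    have h1 : M + 1 + r ≤ (M + 1 + r) * (q + 1) := Nat.le_mul_of_pos_right _ (by omega)
    omega
  omega

lemma card_filter_val_lt (N T : ℕ) (hT : T ≤ N + 1) :
    (Finset.univ.filter fun i : Fin (N + 1) => (i : ℕ) < T).card = T := by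
  have hlt : ∀ m ∈ Finset.range T, m < N + 1 := fun m hm =>
    lt_of_lt_of_le (Finset.mem_range.mp hm) hT
  have heq : (Finset.univ.filter fun i : Fin (N + 1) => (i : ℕ) < T)
      = (Finset.range T).attachFin hlt := by
    ext a
    simp [Finset.mem_attachFin, Finset.mem_range]
  rw [heq, Finset.card_attachFin, Finset.card_range]

end MonoStarAux

open MonoStarAux in
theorem monoStar_symbolic_initial_degree {k : Type*} [Field k] [Infinite k]
    {N c l q r : ℕ} (hN : 1 ≤ N) (hc1 : 1 ≤ c) (hc2 : c ≤ N)
    (hl : l = q * c + r) (hr1 : 1 ≤ r) (hr2 : r ≤ c) :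
    initialDegree (monoStarSym k N c l) = (q + 1) * (N + 1) - c + r := by
  classical
  set T : ℕ := N + 1 - c + r with hTdef
  have hT2 : T ≤ N + 1 := by omega
  set D : ℕ := (q + 1) * (N + 1) - c + r with hDdef
  -- the witness monomial
  set e : Fin (N + 1) →₀ ℕ :=
    Finsupp.equivFunOnFinite.symm (fun i => if (i : ℕ) < T then q + 1 else q) with he
  have heval : ∀ i : Fin (N + 1), e i = if (i : ℕ) < T then q + 1 else q := fun i => rfl
  -- its sums over sets of cardinality c are at least l
  have hsumS : ∀ S : Finset (Fin (N + 1)), S.card = c → l ≤ ∑ i ∈ S, e i := by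
    intro S hS
    have hsplit : ∑ i ∈ S, e i
        = ∑ _i ∈ S, q + ∑ i ∈ S, (if (i : ℕ) < T then 1 else 0) := by
      rw [← Finset.sum_add_distrib]
      refine Finset.sum_congr rfl fun i _ => ?_
      rw [heval i]
      split <;> omega
    have hbool : (∑ i ∈ S, if (i : ℕ) < T then (1 : ℕ) else 0)
        = (S.filter fun i : Fin (N + 1) => (i : ℕ) < T).card := by
      rw [Finset.sum_boole]
      simp
    have hfe : (S.filter fun i : Fin (N + 1) => (i : ℕ) < T)
        = S ∩ (Finset.univ.filter fun i : Fin (N + 1) => (i : ℕ) < T) := by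
      ext x
      simp only [Finset.mem_filter, Finset.mem_inter, Finset.mem_univ, true_and]
    have hcardF := card_filter_val_lt N T hT2
    have hiu := Finset.card_inter_add_card_union S
      (Finset.univ.filter fun i : Fin (N + 1) => (i : ℕ) < T)
    have hun : (S ∪ Finset.univ.filter
        fun i : Fin (N + 1) => (i : ℕ) < T).card ≤ N + 1 := by
      have hle := Finset.card_le_univ (S ∪ Finset.univ.filter
        fun i : Fin (N + 1) => (i : ℕ) < T)
      rwa [Fintype.card_fin] at hle
    have hr' : r ≤ (S.filter fun i : Fin (N + 1) => (i : ℕ) < T).card := by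
      rw [hfe]
      omega
    rw [hsplit, hbool, Finset.sum_const, hS, smul_eq_mul, hl, Nat.mul_comm c q]
    omega
  -- its total degree is D
  have hsumtot : ∑ i, e i = D := by
    have h0 : ∑ i, e i = ∑ j ∈ Finset.range (N + 1), (if j < T then q + 1 else q) := by
      rw [← Fin.sum_univ_eq_sum_range (fun j => if j < T then q + 1 else q) (N + 1)]
      exact Finset.sum_congr rfl fun i _ => heval i
    rw [h0, Finset.range_eq_Ico, ← Finset.sum_Ico_consecutive _ (Nat.zero_le T) hT2]
    have hA : ∑ j ∈ Finset.Ico 0 T, (if j < T then q + 1 else q) = T * (q + 1) := by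
      rw [Finset.sum_congr rfl fun j hj => if_pos (Finset.mem_Ico.mp hj).2,
        Finset.sum_const, Nat.card_Ico, Nat.sub_zero, smul_eq_mul]
    have hB : ∑ j ∈ Finset.Ico T (N + 1), (if j < T then q + 1 else q) = (N + 1 - T) * q := by
      rw [Finset.sum_congr rfl fun j hj => if_neg (by
        have := (Finset.mem_Ico.mp hj).1; omega),
        Finset.sum_const, Nat.card_Ico, smul_eq_mul]
    rw [hA, hB, hDdef, hTdef]
    exact arith1 N c q r hc2 hr1 hr2
  have hdeg0 : ∑ x ∈ e.support, e x = ∑ x, e x :=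
    Finset.sum_subset (Finset.subset_univ _)
      (fun x _ hx => Finsupp.notMem_support_iff.mp hx)
  have hdeg : e.degree = D := by
    rw [Finsupp.degree_apply, hdeg0, hsumtot]
  have hfmem : (monomial e (1 : k)) ∈ monoStarSym k N c l := by
    rw [monoStarSym, Ideal.mem_iInf]
    intro S
    rw [Ideal.mem_iInf]
    intro hS
    exact monomial_mem_pow S l e 1 (hsumS S hS)
  have hfne : (monomial e (1 : k)) ≠ 0 := by
    rw [Ne, MvPolynomial.monomial_eq_zero]
    exact one_ne_zero
  have hfhom : (monomial e (1 : k)).IsHomogeneous D := isHomogeneous_monomial _ hdeg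
  have hDmem : D ∈ {d : ℕ | ∃ f ∈ monoStarSym k N c l, f ≠ 0 ∧ f.IsHomogeneous d} :=
    ⟨monomial e (1 : k), hfmem, hfne, hfhom⟩
  rw [initialDegree]
  refine le_antisymm (Nat.sInf_le hDmem) (le_csInf ⟨D, hDmem⟩ ?_)
  rintro d ⟨g, hg, hgne, hghom⟩
  obtain ⟨m, hm⟩ := MvPolynomial.support_nonempty.mpr hgne
  have hmd : m.degree = d := by
    have := hghom (MvPolynomial.mem_support_iff.mp hm)
    rw [Finsupp.degree_eq_weight_one]
    exact this
  have hsum : ∀ S : Finset (Fin (N + 1)), S.card = c → q * c + r ≤ ∑ i ∈ S, m i := by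
    intro S hS
    have hgS : g ∈ (Ideal.span ((fun i => (X i : MvPolynomial (Fin (N + 1)) k)) '' ↑S)) ^ l := by
      rw [monoStarSym, Ideal.mem_iInf] at hg
      have h' := hg S
      rw [Ideal.mem_iInf] at h'
      exact h' hS
    have := pow_le_lowerIdeal S l hgS m hm
    omega
  have hlow := sum_lower (N := N) hc1 hc2 hr1 hr2 (⇑m) hsum
  have hdm0 : ∑ x ∈ m.support, m x = ∑ x, m x :=
    Finset.sum_subset (Finset.subset_univ _)
      (fun x _ hx => Finsupp.notMem_support_iff.mp hx)
  have hdm : d = ∑ x, m x := by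
    rw [← hmd, Finsupp.degree_apply, hdm0]
  rw [hDdef]
  omega
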